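/- Let H be a complex Hilbert space, u a trace-class operator on H, and K a closed subspace of H with orthogonal projection P_K. Then ‖u P_{K^⊥}‖₁² + ‖u P_K‖₁² ≤ ‖u‖₁², where ‖·‖₁ denotes the trace norm. -/

import Mathlib

open scoped ENNReal

/-- The trace norm of an operator on a Hilbert space, defined as the supremum over
finite orthonormal families `(e i)`, `(f i)` of `∑ i |⟪u (e i), f i⟫|` (valued in
`ℝ≥0∞`; it is finite exactly for trace-class operators). -/
noncomputable def traceNorm {H : Type*} [NormedAddCommGroup H] [InnerProductSpace ℂ H]
    (u : H →L[ℂ] H) : ℝ≥0∞ :=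
  ⨆ (n : ℕ) (e : Fin n → H) (f : Fin n → H) (_ : Orthonormal ℂ e) (_ : Orthonormal ℂ f),
    ∑ i, (‖(inner ℂ (u (e i)) (f i) : ℂ)‖₊ : ℝ≥0∞)

namespace TraceNormAux

open Finset

variable {H : Type*} [NormedAddCommGroup H] [InnerProductSpace ℂ H]

/-- A family is sub-orthonormal if its Gram matrix is dominated by the identity. -/
def SubON {ι : Type*} [Fintype ι] (x : ι → H) : Prop :=
  ∀ c : ι → ℂ, ‖∑ i, c i • x i‖ ^ 2 ≤ ∑ i, ‖c i‖ ^ 2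

lemma norm_sum_sq_of_orthonormal {ι : Type*} [Fintype ι] {x : ι → H}
    (hx : Orthonormal ℂ x) (c : ι → ℂ) :
    ‖∑ i, c i • x i‖ ^ 2 = ∑ i, ‖c i‖ ^ 2 := by
  have h := hx.inner_sum c c Finset.univ
  have h1 : (inner ℂ (∑ i, c i • x i) (∑ i, c i • x i) : ℂ)
      = ((‖∑ i, c i • x i‖ ^ 2 : ℝ) : ℂ) := by
    rw [inner_self_eq_norm_sq_to_K]; norm_cast
  have h2 : ∑ i, (starRingEnd ℂ) (c i) * c i = ((∑ i, ‖c i‖ ^ 2 : ℝ) : ℂ) := by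
    push_cast
    refine Finset.sum_congr rfl fun i _ => ?_
    rw [RCLike.conj_mul]; norm_cast
  rw [h1, h2] at h
  exact_mod_cast h

lemma subON_of_orthonormal {ι : Type*} [Fintype ι] {x : ι → H}
    (hx : Orthonormal ℂ x) : SubON x := fun c =>
  le_of_eq (norm_sum_sq_of_orthonormal hx c)

lemma sum_nnnorm_eq_ofReal {ι : Type*} [Fintype ι] (z : ι → ℂ) :
    ∑ i, (‖z i‖₊ : ℝ≥0∞) = ENNReal.ofReal (∑ i, ‖z i‖) := by
  rw [ENNReal.ofReal_sum_of_nonneg fun i _ => norm_nonneg _]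
  exact Finset.sum_congr rfl fun i _ => (ofReal_norm _).symm

/-- Any orthonormal-pair sum is dominated by the trace norm. -/
lemma sum_le_traceNorm {ι : Type*} [Fintype ι] (u : H →L[ℂ] H) (e f : ι → H)
    (he : Orthonormal ℂ e) (hf : Orthonormal ℂ f) :
    ∑ i, (‖(inner ℂ (u (e i)) (f i) : ℂ)‖₊ : ℝ≥0∞) ≤ traceNorm u := by
  classical
  let σ := (Fintype.equivFin ι).symm
  have he' : Orthonormal ℂ (e ∘ σ) := he.comp σ σ.injective
  have hf' : Orthonormal ℂ (f ∘ σ) := hf.comp σ σ.injective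
  have hsum : ∑ i, (‖(inner ℂ (u (e i)) (f i) : ℂ)‖₊ : ℝ≥0∞)
      = ∑ i, (‖(inner ℂ (u ((e ∘ σ) i)) ((f ∘ σ) i) : ℂ)‖₊ : ℝ≥0∞) :=
    (Equiv.sum_comp σ (fun i => (‖(inner ℂ (u (e i)) (f i) : ℂ)‖₊ : ℝ≥0∞))).symm
  rw [hsum]
  exact le_iSup_of_le (Fintype.card ι) (le_iSup_of_le (e ∘ σ) (le_iSup_of_le (f ∘ σ)
    (le_iSup_of_le he' (le_iSup_of_le hf' le_rfl))))

/-- Bessel-type inequality for sub-orthonormal families. -/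
lemma subON_bessel {ι : Type*} [Fintype ι] {x : ι → H} (hx : SubON x)
    (φ : H) (hφ : ‖φ‖ ≤ 1) :
    ∑ i, ‖(inner ℂ φ (x i) : ℂ)‖ ^ 2 ≤ 1 := by
  classical
  set c : ι → ℂ := fun i => (inner ℂ (x i) φ : ℂ) with hc
  set v : H := ∑ i, c i • x i with hv
  set S : ℝ := ∑ i, ‖(inner ℂ φ (x i) : ℂ)‖ ^ 2 with hS
  have hS0 : 0 ≤ S := Finset.sum_nonneg fun i _ => sq_nonneg _
  have hterm : ∀ i, (inner ℂ φ (c i • x i) : ℂ) = ((‖(inner ℂ φ (x i) : ℂ)‖ ^ 2 : ℝ) : ℂ) := by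
    intro i
    rw [inner_smul_right]
    have hci : c i = (starRingEnd ℂ) (inner ℂ φ (x i) : ℂ) := by
      simp only [hc]
      exact (inner_conj_symm (x i) φ).symm
    rw [hci, RCLike.conj_mul]; norm_cast
  have key : (inner ℂ φ v : ℂ) = (S : ℂ) := by
    rw [hv, inner_sum, hS]
    calc ∑ i, (inner ℂ φ (c i • x i) : ℂ)
        = ∑ i, ((‖(inner ℂ φ (x i) : ℂ)‖ ^ 2 : ℝ) : ℂ) :=
          Finset.sum_congr rfl fun i _ => hterm i
      _ = ((∑ i, ‖(inner ℂ φ (x i) : ℂ)‖ ^ 2 : ℝ) : ℂ) := by push_cast; ring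
  have h1 : S ≤ ‖φ‖ * ‖v‖ := by
    calc S = ‖(inner ℂ φ v : ℂ)‖ := by rw [key]; simp [abs_of_nonneg hS0]
    _ ≤ ‖φ‖ * ‖v‖ := norm_inner_le_norm _ _
  have h2 : ‖v‖ ^ 2 ≤ S := by
    refine le_trans (hx c) ?_
    rw [hS]
    refine le_of_eq (Finset.sum_congr rfl fun i _ => ?_)
    rw [hc, norm_inner_symm]
  have h3 : S * S ≤ (‖φ‖ * ‖v‖) * (‖φ‖ * ‖v‖) := mul_self_le_mul_self hS0 h1
  have hφ2 : ‖φ‖ * ‖φ‖ ≤ 1 := by nlinarith [norm_nonneg φ]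
  have h5 : S * S ≤ ‖v‖ * ‖v‖ := by
    nlinarith [mul_le_mul_of_nonneg_right hφ2 (mul_nonneg (norm_nonneg v) (norm_nonneg v))]
  have h2' : ‖v‖ * ‖v‖ ≤ S := by nlinarith [h2]
  nlinarith [h5, h2', hS0]

/-- The key lemma: for sub-orthonormal families `x`, `y`,
`∑ i ‖⟪u (x i), y i⟫‖` is at most the trace norm of `u`. -/
lemma lemmaA {ι : Type*} [Fintype ι] [CompleteSpace H] (u : H →L[ℂ] H) {x y : ι → H}
    (hx : SubON x) (hy : SubON y) :
    ∑ i, (‖(inner ℂ (u (x i)) (y i) : ℂ)‖₊ : ℝ≥0∞) ≤ traceNorm u := by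
  classical
  set F : Submodule ℂ H := Submodule.span ℂ (Set.range x ∪ Set.range y) with hF
  haveI hfin : FiniteDimensional ℂ F :=
    FiniteDimensional.span_of_finite ℂ ((Set.finite_range x).union (Set.finite_range y))
  have hxF : ∀ i, x i ∈ F := fun i => Submodule.subset_span (Or.inl ⟨i, rfl⟩)
  have hyF : ∀ i, y i ∈ F := fun i => Submodule.subset_span (Or.inr ⟨i, rfl⟩)
  set v : F →ₗ[ℂ] F :=
    ((Submodule.orthogonalProjectionOnto F : H →L[ℂ] F) : H →ₗ[ℂ] F).comp
      ((u : H →ₗ[ℂ] H).comp F.subtype) with hvdef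
  have key0 : ∀ (ξ ζ : F), (inner ℂ (u (ξ : H)) ((ζ : H)) : ℂ) = inner ℂ (v ξ) ζ := by
    intro ξ ζ
    have h1 : (inner ℂ (v ξ) ζ : ℂ)
        = inner ℂ ((Submodule.orthogonalProjectionOnto F (u (ξ : H)) : F) : H) (ζ : H) := rfl
    rw [h1]
    have h2 : (inner ℂ (u (ξ : H) - (Submodule.orthogonalProjectionOnto F (u (ξ : H)) : H)) ((ζ : H)) : ℂ) = 0 :=
      Submodule.starProjection_inner_eq_zero _ _ ζ.2
    rw [inner_sub_left, sub_eq_zero] at h2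
    exact h2
  set T : F →ₗ[ℂ] F := LinearMap.adjoint v * v with hT
  have hTsym : T.IsSymmetric := LinearMap.isSymmetric_adjoint_mul_self v
  set N := Module.finrank ℂ F with hN
  set w := hTsym.eigenvectorBasis rfl with hw
  set μ := hTsym.eigenvalues rfl with hμ
  have hvw : ∀ r q : Fin N, (inner ℂ (v (w r)) (v (w q)) : ℂ)
      = if r = q then (μ r : ℂ) else 0 := by
    intro r q
    have h1 : (inner ℂ (v (w r)) (v (w q)) : ℂ) = inner ℂ (T (w r)) (w q) := by
      rw [hT]
      simp only [Module.End.mul_apply]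
      rw [LinearMap.adjoint_inner_left]
    rw [h1, hTsym.apply_eigenvectorBasis rfl r, inner_smul_left,
      orthonormal_iff_ite.mp w.orthonormal r q]
    by_cases hrq : r = q <;> simp [hrq, Complex.conj_ofReal] <;> rfl
  set s : Fin N → ℝ := fun r => ‖v (w r)‖ with hs
  have hs0 : ∀ r, 0 ≤ s r := fun r => norm_nonneg _
  have hsq : ∀ r, (s r) ^ 2 = μ r := by
    intro r
    have h := hvw r r
    rw [if_pos rfl, inner_self_eq_norm_sq_to_K] at h
    show ‖v (w r)‖ ^ 2 = μ r
    have h2 : ((‖v (w r)‖ ^ 2 : ℝ) : ℂ) = ((μ r : ℝ) : ℂ) := by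
      rw [← h]; norm_cast
    exact_mod_cast h2
  -- support subtype
  set p : Fin N → Prop := fun r => v (w r) ≠ 0 with hp
  have hsne : ∀ r, p r → s r ≠ 0 := fun r hr h => hr (norm_eq_zero.mp h)
  have hcne : ∀ r : Subtype p, ((s r.1 : ℂ)) ≠ 0 :=
    fun r => Complex.ofReal_ne_zero.mpr (hsne r.1 r.2)
  set ψ : Subtype p → H := fun r => ((s r.1 : ℂ))⁻¹ • ((v (w r.1) : F) : H) with hψ
  set W : Subtype p → H := fun r => ((w r.1 : F) : H) with hW
  have hinner_coe : ∀ (a b : F), (inner ℂ a b : ℂ) = inner ℂ (a : H) (b : H) := fun a b => rfl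
  have hWon : Orthonormal ℂ W := by
    constructor
    · intro r
      exact w.orthonormal.1 r.1
    · intro r q hrq
      exact w.orthonormal.2 (fun h' => hrq (Subtype.ext h'))
  have hψon : Orthonormal ℂ ψ := by
    constructor
    · intro r
      show ‖((s r.1 : ℂ))⁻¹ • ((v (w r.1) : F) : H)‖ = 1
      rw [norm_smul, norm_inv, Complex.norm_real, Real.norm_of_nonneg (hs0 r.1)]
      exact inv_mul_cancel₀ (hsne r.1 r.2)
    · intro r q hrq
      have h := hvw r.1 q.1
      rw [if_neg (fun h' => hrq (Subtype.ext h'))] at h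
      show (inner ℂ (((s r.1 : ℂ))⁻¹ • ((v (w r.1) : F) : H))
          (((s q.1 : ℂ))⁻¹ • ((v (w q.1) : F) : H)) : ℂ) = 0
      rw [inner_smul_left, inner_smul_right]
      have hic : (inner ℂ (((v (w r.1) : F)) : H) (((v (w q.1) : F)) : H) : ℂ)
          = inner ℂ (v (w r.1)) (v (w q.1)) := rfl
      rw [hic, h, mul_zero, mul_zero]
  -- expansion
  have key1 : ∀ (ξ ζ : F), (inner ℂ (v ξ) ζ : ℂ)
      = ∑ r, (starRingEnd ℂ) (inner ℂ ((w r : F)) ξ : ℂ) * (inner ℂ (v (w r)) ζ : ℂ) := by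
    intro ξ ζ
    conv_lhs => rw [← w.sum_repr' ξ]
    rw [map_sum, sum_inner]
    refine Finset.sum_congr rfl fun r _ => ?_
    rw [map_smul, inner_smul_left]
  -- the main estimate, real version
  have hmain : ∑ i, ‖(inner ℂ (u (x i)) (y i) : ℂ)‖ ≤ ∑ r : Subtype p, s r.1 := by
    have step1 : ∀ i, ‖(inner ℂ (u (x i)) (y i) : ℂ)‖
        ≤ ∑ r, ‖(inner ℂ ((w r : F) : H) (x i) : ℂ)‖ * ‖(inner ℂ (v (w r)) (⟨y i, hyF i⟩ : F) : ℂ)‖ := by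
      intro i
      have h1 : (inner ℂ (u (x i)) (y i) : ℂ) = inner ℂ (v ⟨x i, hxF i⟩) (⟨y i, hyF i⟩ : F) :=
        key0 ⟨x i, hxF i⟩ ⟨y i, hyF i⟩
      rw [h1, key1]
      refine le_trans (norm_sum_le _ _) (le_of_eq (Finset.sum_congr rfl fun r _ => ?_))
      rw [norm_mul, RCLike.norm_conj]
      congr 1
    calc ∑ i, ‖(inner ℂ (u (x i)) (y i) : ℂ)‖
        ≤ ∑ i, ∑ r, ‖(inner ℂ ((w r : F) : H) (x i) : ℂ)‖
            * ‖(inner ℂ (v (w r)) (⟨y i, hyF i⟩ : F) : ℂ)‖ :=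
          Finset.sum_le_sum fun i _ => step1 i
      _ = ∑ r, ∑ i, ‖(inner ℂ ((w r : F) : H) (x i) : ℂ)‖
            * ‖(inner ℂ (v (w r)) (⟨y i, hyF i⟩ : F) : ℂ)‖ := Finset.sum_comm
      _ = ∑ r ∈ Finset.univ.filter p, ∑ i, ‖(inner ℂ ((w r : F) : H) (x i) : ℂ)‖
            * ‖(inner ℂ (v (w r)) (⟨y i, hyF i⟩ : F) : ℂ)‖ := by
          refine (Finset.sum_filter_of_ne fun r _ hne => ?_).symm
          by_contra hpr
          exact hne (Finset.sum_eq_zero fun i _ => by rw [hpr]; simp)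
      _ = ∑ r : Subtype p, ∑ i, ‖(inner ℂ ((w r.1 : F) : H) (x i) : ℂ)‖
            * ‖(inner ℂ (v (w r.1)) (⟨y i, hyF i⟩ : F) : ℂ)‖ := by
          exact Finset.sum_subtype (Finset.univ.filter p)
            (fun r => by simp [Finset.mem_filter, hp]) _
      _ ≤ ∑ r : Subtype p, s r.1 := by
          refine Finset.sum_le_sum fun r _ => ?_
          have hcoe : ((v (w r.1) : F) : H) = (s r.1 : ℂ) • ψ r := by
            show ((v (w r.1) : F) : H)
                = (s r.1 : ℂ) • ((s r.1 : ℂ))⁻¹ • ((v (w r.1) : F) : H)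
            rw [smul_inv_smul₀ (hcne r)]
          have hterm : ∀ i, ‖(inner ℂ (v (w r.1)) (⟨y i, hyF i⟩ : F) : ℂ)‖
              = s r.1 * ‖(inner ℂ (ψ r) (y i) : ℂ)‖ := by
            intro i
            have h0 : (inner ℂ (v (w r.1)) (⟨y i, hyF i⟩ : F) : ℂ)
                = inner ℂ (((v (w r.1) : F)) : H) (y i) := rfl
            rw [h0, hcoe, inner_smul_left, norm_mul, RCLike.norm_conj, Complex.norm_real,
              Real.norm_of_nonneg (hs0 r.1)]
          calc ∑ i, ‖(inner ℂ ((w r.1 : F) : H) (x i) : ℂ)‖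
                * ‖(inner ℂ (v (w r.1)) (⟨y i, hyF i⟩ : F) : ℂ)‖
              = s r.1 * ∑ i, ‖(inner ℂ ((w r.1 : F) : H) (x i) : ℂ)‖
                * ‖(inner ℂ (ψ r) (y i) : ℂ)‖ := by
                rw [Finset.mul_sum]
                refine Finset.sum_congr rfl fun i _ => ?_
                rw [hterm i]; ring
            _ ≤ s r.1 * 1 := by
                refine mul_le_mul_of_nonneg_left ?_ (hs0 r.1)
                have hb1 : ∑ i, ‖(inner ℂ ((w r.1 : F) : H) (x i) : ℂ)‖ ^ 2 ≤ 1 :=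
                  subON_bessel hx _ (le_of_eq (hWon.1 r))
                have hb2 : ∑ i, ‖(inner ℂ (ψ r) (y i) : ℂ)‖ ^ 2 ≤ 1 :=
                  subON_bessel hy _ (le_of_eq (hψon.1 r))
                calc ∑ i, ‖(inner ℂ ((w r.1 : F) : H) (x i) : ℂ)‖ * ‖(inner ℂ (ψ r) (y i) : ℂ)‖
                    ≤ ∑ i, (‖(inner ℂ ((w r.1 : F) : H) (x i) : ℂ)‖ ^ 2
                        + ‖(inner ℂ (ψ r) (y i) : ℂ)‖ ^ 2) / 2 := by
                      refine Finset.sum_le_sum fun i _ => ?_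
                      nlinarith [sq_nonneg (‖(inner ℂ ((w r.1 : F) : H) (x i) : ℂ)‖
                        - ‖(inner ℂ (ψ r) (y i) : ℂ)‖)]
                  _ = (∑ i, ‖(inner ℂ ((w r.1 : F) : H) (x i) : ℂ)‖ ^ 2
                        + ∑ i, ‖(inner ℂ (ψ r) (y i) : ℂ)‖ ^ 2) / 2 := by
                      rw [← Finset.sum_add_distrib, Finset.sum_div]
                  _ ≤ (1 + 1) / 2 := by linarith
                  _ = 1 := by norm_num
            _ = s r.1 := mul_one _
  -- identify s r with an inner ℂ product against orthonormal families
  have hfinal : ∀ r : Subtype p, s r.1 = ‖(inner ℂ (u (W r)) (ψ r) : ℂ)‖ := by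
    intro r
    have h1 : (inner ℂ (u (W r)) (ψ r) : ℂ)
        = inner ℂ (v (w r.1)) (((s r.1 : ℂ))⁻¹ • v (w r.1) : F) :=
      key0 (w r.1) (((s r.1 : ℂ))⁻¹ • v (w r.1))
    rw [h1, inner_smul_right, norm_mul, norm_inv, Complex.norm_real,
      Real.norm_of_nonneg (hs0 r.1)]
    have h2 : ‖(inner ℂ (v (w r.1)) (v (w r.1)) : ℂ)‖ = s r.1 ^ 2 := by
      have h3 := hvw r.1 r.1
      rw [if_pos rfl] at h3
      rw [h3, ← hsq r.1, Complex.norm_real, Real.norm_of_nonneg (sq_nonneg _)]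
    rw [h2, pow_two, ← mul_assoc, inv_mul_cancel₀ (hsne r.1 r.2), one_mul]
  -- conclude in ℝ≥0∞
  calc ∑ i, (‖(inner ℂ (u (x i)) (y i) : ℂ)‖₊ : ℝ≥0∞)
      = ENNReal.ofReal (∑ i, ‖(inner ℂ (u (x i)) (y i) : ℂ)‖) := sum_nnnorm_eq_ofReal _
    _ ≤ ENNReal.ofReal (∑ r : Subtype p, ‖(inner ℂ (u (W r)) (ψ r) : ℂ)‖) := by
        refine ENNReal.ofReal_le_ofReal (le_trans hmain (le_of_eq ?_))
        exact Finset.sum_congr rfl fun r _ => hfinal r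
    _ = ∑ r : Subtype p, (‖(inner ℂ (u (W r)) (ψ r) : ℂ)‖₊ : ℝ≥0∞) :=
        (sum_nnnorm_eq_ofReal _).symm
    _ ≤ traceNorm u := sum_le_traceNorm u W ψ hWon hψon

lemma proj_contract (K : Submodule ℂ H) [Submodule.HasOrthogonalProjection K] (z : H) :
    ‖(K.subtypeL ∘L Submodule.orthogonalProjectionOnto K) z‖ ≤ ‖z‖ := by
  calc ‖(K.subtypeL ∘L Submodule.orthogonalProjectionOnto K) z‖
      = ‖Submodule.orthogonalProjectionOnto K z‖ := rfl
    _ ≤ ‖Submodule.orthogonalProjectionOnto K‖ * ‖z‖ := (Submodule.orthogonalProjectionOnto K).le_opNorm z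
    _ ≤ 1 * ‖z‖ := mul_le_mul_of_nonneg_right (Submodule.orthogonalProjectionOnto_norm_le K) (norm_nonneg z)
    _ = ‖z‖ := one_mul _

lemma traceNorm_le_bound (w : H →L[ℂ] H) {t : ℝ≥0∞}
    (h : ∀ (n : ℕ) (e f : Fin n → H), Orthonormal ℂ e → Orthonormal ℂ f →
      ∑ i, (‖(inner ℂ (w (e i)) (f i) : ℂ)‖₊ : ℝ≥0∞) ≤ t) : traceNorm w ≤ t := by
  rw [traceNorm]
  exact iSup_le fun n => iSup_le fun e => iSup_le fun f => iSup_le fun he =>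
    iSup_le fun hf => h n e f he hf

lemma exists_family {w : H →L[ℂ] H} {r : ℝ≥0∞} (h : r < traceNorm w) :
    ∃ (n : ℕ) (e f : Fin n → H), Orthonormal ℂ e ∧ Orthonormal ℂ f ∧
      r < ∑ i, (‖(inner ℂ (w (e i)) (f i) : ℂ)‖₊ : ℝ≥0∞) := by
  rw [traceNorm] at h
  obtain ⟨n, h⟩ := lt_iSup_iff.mp h
  obtain ⟨e, h⟩ := lt_iSup_iff.mp h
  obtain ⟨f, h⟩ := lt_iSup_iff.mp h
  obtain ⟨he, h⟩ := lt_iSup_iff.mp h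
  obtain ⟨hf, h⟩ := lt_iSup_iff.mp h
  exact ⟨n, e, f, he, hf, h⟩

lemma exists_family_real (w : H →L[ℂ] H) (hw : traceNorm w ≠ ⊤) {δ : ℝ} (hδ : 0 < δ) :
    ∃ (n : ℕ) (e f : Fin n → H), Orthonormal ℂ e ∧ Orthonormal ℂ f ∧
      (traceNorm w).toReal - δ < ∑ i, ‖(inner ℂ (w (e i)) (f i) : ℂ)‖ ∧
      ∑ i, ‖(inner ℂ (w (e i)) (f i) : ℂ)‖ ≤ (traceNorm w).toReal := by
  by_cases hneg : (traceNorm w).toReal - δ < 0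
  · refine ⟨0, Fin.elim0, Fin.elim0, ⟨fun i => i.elim0, fun i => i.elim0⟩,
      ⟨fun i => i.elim0, fun i => i.elim0⟩, ?_, ?_⟩
    · simpa using hneg
    · simp
  · push_neg at hneg
    have hlt : ENNReal.ofReal ((traceNorm w).toReal - δ) < traceNorm w := by
      rw [ENNReal.ofReal_lt_iff_lt_toReal hneg hw]
      linarith
    obtain ⟨n, e, f, he, hf, hgt⟩ := exists_family hlt
    have hsum := sum_nnnorm_eq_ofReal (fun i => (inner ℂ (w (e i)) (f i) : ℂ))
    have hle : ∑ i, (‖(inner ℂ (w (e i)) (f i) : ℂ)‖₊ : ℝ≥0∞) ≤ traceNorm w :=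
      sum_le_traceNorm w e f he hf
    have hS0 : 0 ≤ ∑ i, ‖(inner ℂ (w (e i)) (f i) : ℂ)‖ :=
      Finset.sum_nonneg fun i _ => norm_nonneg _
    refine ⟨n, e, f, he, hf, ?_, ?_⟩
    · rw [hsum] at hgt
      exact (ENNReal.ofReal_lt_ofReal_iff'.mp hgt).1
    · rw [hsum] at hle
      calc ∑ i, ‖(inner ℂ (w (e i)) (f i) : ℂ)‖
          = (ENNReal.ofReal (∑ i, ‖(inner ℂ (w (e i)) (f i) : ℂ)‖)).toReal :=
            (ENNReal.toReal_ofReal hS0).symm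
        _ ≤ (traceNorm w).toReal := ENNReal.toReal_mono hw hle

lemma subON_proj (K : Submodule ℂ H) [Submodule.HasOrthogonalProjection K] {ι : Type*} [Fintype ι]
    {e : ι → H} (he : Orthonormal ℂ e) :
    SubON (fun i => (K.subtypeL ∘L Submodule.orthogonalProjectionOnto K) (e i)) := by
  intro c
  have h1 : ∑ i, c i • (K.subtypeL ∘L Submodule.orthogonalProjectionOnto K) (e i)
      = (K.subtypeL ∘L Submodule.orthogonalProjectionOnto K) (∑ i, c i • e i) := by
    rw [map_sum]
    exact Finset.sum_congr rfl fun i _ => (map_smul _ _ _).symm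
  rw [h1, ← norm_sum_sq_of_orthonormal he c]
  exact pow_le_pow_left₀ (norm_nonneg _) (proj_contract K _) 2

lemma combo [CompleteSpace H] (u : H →L[ℂ] H) (K : Submodule ℂ H)
    [Submodule.HasOrthogonalProjection K] [Submodule.HasOrthogonalProjection Kᗮ]
    (htc : traceNorm u ≠ ⊤) {α β : ℝ} (hα : 0 ≤ α) (hβ : 0 ≤ β) (hαβ : α ^ 2 + β ^ 2 ≤ 1)
    {n m : ℕ} {e f : Fin n → H} {e' f' : Fin m → H}
    (he : Orthonormal ℂ e) (hf : Orthonormal ℂ f)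
    (he' : Orthonormal ℂ e') (hf' : Orthonormal ℂ f') :
    α * ∑ i, ‖(inner ℂ ((u ∘L (Kᗮ.subtypeL ∘L Submodule.orthogonalProjectionOnto Kᗮ)) (e i)) (f i) : ℂ)‖
      + β * ∑ j, ‖(inner ℂ ((u ∘L (K.subtypeL ∘L Submodule.orthogonalProjectionOnto K)) (e' j)) (f' j) : ℂ)‖
      ≤ (traceNorm u).toReal := by
  classical
  set Q : H →L[ℂ] H := Kᗮ.subtypeL ∘L Submodule.orthogonalProjectionOnto Kᗮ with hQdef
  set P : H →L[ℂ] H := K.subtypeL ∘L Submodule.orthogonalProjectionOnto K with hPdef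
  have hQmem : ∀ z : H, Q z ∈ Kᗮ := fun z => (Submodule.orthogonalProjectionOnto Kᗮ z).2
  have hPmem : ∀ z : H, P z ∈ K := fun z => (Submodule.orthogonalProjectionOnto K z).2
  have hx : SubON (Sum.elim (fun i => Q (e i)) (fun j => P (e' j))) := by
    intro c
    rw [Fintype.sum_sum_type]
    simp only [Sum.elim_inl, Sum.elim_inr]
    have h1 : ∑ i, c (Sum.inl i) • Q (e i) = Q (∑ i, c (Sum.inl i) • e i) := by
      rw [map_sum]
      exact Finset.sum_congr rfl fun i _ => (map_smul _ _ _).symm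
    have h2 : ∑ j, c (Sum.inr j) • P (e' j) = P (∑ j, c (Sum.inr j) • e' j) := by
      rw [map_sum]
      exact Finset.sum_congr rfl fun j _ => (map_smul _ _ _).symm
    rw [h1, h2]
    have horth : (inner ℂ (Q (∑ i, c (Sum.inl i) • e i)) (P (∑ j, c (Sum.inr j) • e' j)) : ℂ) = 0 :=
      Submodule.inner_left_of_mem_orthogonal (hPmem _) (hQmem _)
    have hpyth := norm_add_sq_eq_norm_sq_add_norm_sq_of_inner_eq_zero _ _ horth
    have hq2 : ‖Q (∑ i, c (Sum.inl i) • e i)‖ ^ 2 ≤ ∑ i, ‖c (Sum.inl i)‖ ^ 2 := by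
      rw [← norm_sum_sq_of_orthonormal he (fun i => c (Sum.inl i))]
      exact pow_le_pow_left₀ (norm_nonneg _) (proj_contract Kᗮ _) 2
    have hp2 : ‖P (∑ j, c (Sum.inr j) • e' j)‖ ^ 2 ≤ ∑ j, ‖c (Sum.inr j)‖ ^ 2 := by
      rw [← norm_sum_sq_of_orthonormal he' (fun j => c (Sum.inr j))]
      exact pow_le_pow_left₀ (norm_nonneg _) (proj_contract K _) 2
    rw [Fintype.sum_sum_type]
    calc ‖Q (∑ i, c (Sum.inl i) • e i) + P (∑ j, c (Sum.inr j) • e' j)‖ ^ 2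
        = ‖Q (∑ i, c (Sum.inl i) • e i)‖ ^ 2 + ‖P (∑ j, c (Sum.inr j) • e' j)‖ ^ 2 := by
          rw [pow_two, pow_two, pow_two]
          exact hpyth
      _ ≤ ∑ i, ‖c (Sum.inl i)‖ ^ 2 + ∑ j, ‖c (Sum.inr j)‖ ^ 2 := add_le_add hq2 hp2
  have hy : SubON (Sum.elim (fun i => (α : ℂ) • f i) (fun j => (β : ℂ) • f' j)) := by
    intro c
    rw [Fintype.sum_sum_type]
    simp only [Sum.elim_inl, Sum.elim_inr]
    have h1 : ∑ i, c (Sum.inl i) • (α : ℂ) • f i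
        = (α : ℂ) • ∑ i, c (Sum.inl i) • f i := by
      rw [Finset.smul_sum]
      exact Finset.sum_congr rfl fun i _ => smul_comm _ _ _
    have h2 : ∑ j, c (Sum.inr j) • (β : ℂ) • f' j
        = (β : ℂ) • ∑ j, c (Sum.inr j) • f' j := by
      rw [Finset.smul_sum]
      exact Finset.sum_congr rfl fun j _ => smul_comm _ _ _
    rw [h1, h2, Fintype.sum_sum_type]
    set F1 := ∑ i, c (Sum.inl i) • f i with hF1
    set F2 := ∑ j, c (Sum.inr j) • f' j with hF2
    have hn1 : ‖F1‖ ^ 2 = ∑ i, ‖c (Sum.inl i)‖ ^ 2 := norm_sum_sq_of_orthonormal hf _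
    have hn2 : ‖F2‖ ^ 2 = ∑ j, ‖c (Sum.inr j)‖ ^ 2 := norm_sum_sq_of_orthonormal hf' _
    have htri : ‖(α : ℂ) • F1 + (β : ℂ) • F2‖ ≤ α * ‖F1‖ + β * ‖F2‖ := by
      refine le_trans (norm_add_le _ _) ?_
      rw [norm_smul, norm_smul, Complex.norm_real, Complex.norm_real,
        Real.norm_of_nonneg hα, Real.norm_of_nonneg hβ]
    have hsq : ‖(α : ℂ) • F1 + (β : ℂ) • F2‖ ^ 2 ≤ (α * ‖F1‖ + β * ‖F2‖) ^ 2 := by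
      have := mul_self_le_mul_self (norm_nonneg _) htri
      nlinarith
    nlinarith [sq_nonneg (α * ‖F2‖ - β * ‖F1‖), norm_nonneg F1, norm_nonneg F2,
      mul_nonneg hα hβ, mul_nonneg (norm_nonneg F1) (norm_nonneg F2), sq_nonneg ‖F1‖,
      sq_nonneg ‖F2‖]
  have hENN := lemmaA u hx hy
  have hreal : ∑ k : Fin n ⊕ Fin m,
      ‖(inner ℂ (u (Sum.elim (fun i => Q (e i)) (fun j => P (e' j)) k))
        (Sum.elim (fun i => (α : ℂ) • f i) (fun j => (β : ℂ) • f' j) k) : ℂ)‖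
      ≤ (traceNorm u).toReal := by
    rw [sum_nnnorm_eq_ofReal] at hENN
    have hS0 : 0 ≤ ∑ k : Fin n ⊕ Fin m,
        ‖(inner ℂ (u (Sum.elim (fun i => Q (e i)) (fun j => P (e' j)) k))
          (Sum.elim (fun i => (α : ℂ) • f i) (fun j => (β : ℂ) • f' j) k) : ℂ)‖ :=
      Finset.sum_nonneg fun k _ => norm_nonneg _
    calc ∑ k : Fin n ⊕ Fin m,
        ‖(inner ℂ (u (Sum.elim (fun i => Q (e i)) (fun j => P (e' j)) k))
          (Sum.elim (fun i => (α : ℂ) • f i) (fun j => (β : ℂ) • f' j) k) : ℂ)‖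
        = (ENNReal.ofReal (∑ k : Fin n ⊕ Fin m,
            ‖(inner ℂ (u (Sum.elim (fun i => Q (e i)) (fun j => P (e' j)) k))
              (Sum.elim (fun i => (α : ℂ) • f i) (fun j => (β : ℂ) • f' j) k) : ℂ)‖)).toReal :=
          (ENNReal.toReal_ofReal hS0).symm
      _ ≤ (traceNorm u).toReal := ENNReal.toReal_mono htc hENN
  rw [Fintype.sum_sum_type] at hreal
  simp only [Sum.elim_inl, Sum.elim_inr] at hreal
  have hA : ∑ i, ‖(inner ℂ (u (Q (e i))) ((α : ℂ) • f i) : ℂ)‖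
      = α * ∑ i, ‖(inner ℂ (u (Q (e i))) (f i) : ℂ)‖ := by
    rw [Finset.mul_sum]
    refine Finset.sum_congr rfl fun i _ => ?_
    rw [inner_smul_right, norm_mul, Complex.norm_real, Real.norm_of_nonneg hα]
  have hB : ∑ j, ‖(inner ℂ (u (P (e' j))) ((β : ℂ) • f' j) : ℂ)‖
      = β * ∑ j, ‖(inner ℂ (u (P (e' j))) (f' j) : ℂ)‖ := by
    rw [Finset.mul_sum]
    refine Finset.sum_congr rfl fun j _ => ?_
    rw [inner_smul_right, norm_mul, Complex.norm_real, Real.norm_of_nonneg hβ]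
  rw [hA, hB] at hreal
  simp only [ContinuousLinearMap.comp_apply]
  exact hreal

end TraceNormAux

set_option maxHeartbeats 1600000 in
/-- for a trace-class operator `u` and a closed subspace `K` with
orthogonal projection `P_K`, one has `‖u P_{K^⊥}‖₁² + ‖u P_K‖₁² ≤ ‖u‖₁²`. -/
theorem traceNorm_comp_projection_sq_add_sq_le {H : Type*} [NormedAddCommGroup H]
    [InnerProductSpace ℂ H] [CompleteSpace H] (u : H →L[ℂ] H) (K : Submodule ℂ H)
    (hK : IsClosed (K : Set H)) [K.HasOrthogonalProjection]
    [Kᗮ.HasOrthogonalProjection] (htc : traceNorm u ≠ ⊤) :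
    traceNorm (u ∘L (Kᗮ.subtypeL ∘L Kᗮ.orthogonalProjectionOnto)) ^ 2 +
        traceNorm (u ∘L (K.subtypeL ∘L K.orthogonalProjectionOnto)) ^ 2 ≤
      traceNorm u ^ 2 := by
  classical
  open TraceNormAux in
  set Q : H →L[ℂ] H := Kᗮ.subtypeL ∘L Submodule.orthogonalProjectionOnto Kᗮ with hQdef
  set P : H →L[ℂ] H := K.subtypeL ∘L Submodule.orthogonalProjectionOnto K with hPdef
  have hQle : traceNorm (u ∘L Q) ≤ traceNorm u := by
    refine TraceNormAux.traceNorm_le_bound _ fun n e f he hf => ?_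
    simp only [ContinuousLinearMap.comp_apply]
    exact TraceNormAux.lemmaA u (TraceNormAux.subON_proj Kᗮ he)
      (TraceNormAux.subON_of_orthonormal hf)
  have hPle : traceNorm (u ∘L P) ≤ traceNorm u := by
    refine TraceNormAux.traceNorm_le_bound _ fun n e f he hf => ?_
    simp only [ContinuousLinearMap.comp_apply]
    exact TraceNormAux.lemmaA u (TraceNormAux.subON_proj K he)
      (TraceNormAux.subON_of_orthonormal hf)
  have hQt : traceNorm (u ∘L Q) ≠ ⊤ := fun h => htc (top_le_iff.mp (h ▸ hQle))
  have hPt : traceNorm (u ∘L P) ≠ ⊤ := fun h => htc (top_le_iff.mp (h ▸ hPle))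
  set a : ℝ := (traceNorm (u ∘L Q)).toReal with hadef
  set b : ℝ := (traceNorm (u ∘L P)).toReal with hbdef
  set c : ℝ := (traceNorm u).toReal with hcdef
  have ha0 : 0 ≤ a := ENNReal.toReal_nonneg
  have hb0 : 0 ≤ b := ENNReal.toReal_nonneg
  have hc0 : 0 ≤ c := ENNReal.toReal_nonneg
  have key : ∀ ε : ℝ, 0 < ε → a ^ 2 + b ^ 2 ≤ c ^ 2 + ε := by
    intro ε hε
    set δ : ℝ := min 1 (ε / (2 * a + 2 * b + 2)) with hδdef
    have hden : (0:ℝ) < 2 * a + 2 * b + 2 := by linarith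
    have hδpos : 0 < δ := lt_min one_pos (div_pos hε hden)
    have hδ1 : δ ≤ 1 := min_le_left _ _
    have hδ2 : δ * (2 * a + 2 * b + 2) ≤ ε := by
      have h := min_le_right 1 (ε / (2 * a + 2 * b + 2))
      calc δ * (2 * a + 2 * b + 2) ≤ (ε / (2 * a + 2 * b + 2)) * (2 * a + 2 * b + 2) :=
            mul_le_mul_of_nonneg_right h hden.le
        _ = ε := by field_simp
    obtain ⟨n, e, f, he, hf, hS1lt, hS1le⟩ := TraceNormAux.exists_family_real (u ∘L Q) hQt hδpos
    obtain ⟨m, e', f', he', hf', hS2lt, hS2le⟩ := TraceNormAux.exists_family_real (u ∘L P) hPt hδpos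
    set S1 : ℝ := ∑ i, ‖(inner ℂ ((u ∘L Q) (e i)) (f i) : ℂ)‖ with hS1def
    set S2 : ℝ := ∑ j, ‖(inner ℂ ((u ∘L P) (e' j)) (f' j) : ℂ)‖ with hS2def
    have hS1nn : 0 ≤ S1 := Finset.sum_nonneg fun i _ => norm_nonneg _
    have hS2nn : 0 ≤ S2 := Finset.sum_nonneg fun j _ => norm_nonneg _
    have hd : S1 ^ 2 + S2 ^ 2 ≤ c ^ 2 := by
      by_cases h0 : S1 = 0 ∧ S2 = 0
      · rw [h0.1, h0.2]
        simpa using sq_nonneg c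
      · have hpos : 0 < S1 ^ 2 + S2 ^ 2 := by
          rcases not_and_or.mp h0 with h | h
          · have h1 : 0 < S1 := lt_of_le_of_ne hS1nn (Ne.symm h)
            nlinarith [sq_nonneg S2]
          · have h1 : 0 < S2 := lt_of_le_of_ne hS2nn (Ne.symm h)
            nlinarith [sq_nonneg S1]
        set d : ℝ := Real.sqrt (S1 ^ 2 + S2 ^ 2) with hddef
        have hd2 : d ^ 2 = S1 ^ 2 + S2 ^ 2 := Real.sq_sqrt hpos.le
        have hdpos : 0 < d := Real.sqrt_pos.mpr hpos
        have hαβ : (S1 / d) ^ 2 + (S2 / d) ^ 2 ≤ 1 := by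
          rw [div_pow, div_pow, ← add_div, ← hd2]
          rw [div_self (by positivity)]
        have hcombo := TraceNormAux.combo u K htc (div_nonneg hS1nn hdpos.le)
          (div_nonneg hS2nn hdpos.le) hαβ he hf he' hf'
        have hcombo' : S1 / d * S1 + S2 / d * S2 ≤ c := hcombo
        have hdd : S1 / d * S1 + S2 / d * S2 = d := by
          field_simp
          nlinarith [hd2]
        have hdc : d ≤ c := by rw [← hdd]; exact hcombo'
        nlinarith [hdpos]
    have hA2 : a ^ 2 ≤ (S1 + δ) ^ 2 := by nlinarith [hS1lt]
    have hB2 : b ^ 2 ≤ (S2 + δ) ^ 2 := by nlinarith [hS2lt]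
    nlinarith [hd, hA2, hB2, hδpos, hδ1, hδ2, hS1nn, hS2nn,
      mul_le_mul_of_nonneg_left hS1le hδpos.le, mul_le_mul_of_nonneg_left hS2le hδpos.le]
  have hfinal : a ^ 2 + b ^ 2 ≤ c ^ 2 :=
    le_of_forall_pos_le_add fun ε hε => key ε hε
  have h1 : traceNorm (u ∘L Q) = ENNReal.ofReal a := (ENNReal.ofReal_toReal hQt).symm
  have h2 : traceNorm (u ∘L P) = ENNReal.ofReal b := (ENNReal.ofReal_toReal hPt).symm
  have h3 : traceNorm u = ENNReal.ofReal c := (ENNReal.ofReal_toReal htc).symm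
  rw [h1, h2, h3, ← ENNReal.ofReal_pow ha0, ← ENNReal.ofReal_pow hb0, ← ENNReal.ofReal_pow hc0,
    ← ENNReal.ofReal_add (by positivity) (by positivity)]
  exact ENNReal.ofReal_le_ofReal hfinal
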